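/- Let G be a finite simple graph with vertex set V and edge set E, let S' ⊆ E, and let k be a natural number. Let G' be obtained from G by subdividing every edge of S' exactly once: for each edge e = uv ∈ S', delete e and add a new vertex x_e adjacent exactly to u and v; let S be the set of new vertices {x_e : e ∈ S'}. Then there exists T ⊆ V with |T| ≤ k such that no simple cycle of the subgraph of G induced on V ∖ T contains an edge of S', if and only if there exists T' ⊆ V(G') with |T'| ≤ k such that no simple cycle of the subgraph of G' induced on V(G') ∖ T' contains a vertex of S. -/

import Mathlib

open SimpleGraph Walk Sum

namespace SubsetFVSAux
attribute [local instance] Classical.propDecidable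
set_option linter.unusedSectionVars false

lemma mem_support_rotate {α : Type*} [DecidableEq α] {H : SimpleGraph α} {v u : α} (c : H.Walk v v)
    (hu : u ∈ c.support) (x : α) : x ∈ (c.rotate u hu).support ↔ x ∈ c.support := by
  unfold Walk.rotate
  rw [mem_support_append_iff]
  conv_rhs => rw [← take_spec c hu, mem_support_append_iff]
  exact or_comm

lemma mem_support_of_mem_edges'' {α : Type*} {H : SimpleGraph α} {u v y : α} (c : H.Walk u v)
    {d : Sym2 α} (hd : d ∈ c.edges) (hy : y ∈ d) : y ∈ c.support := by
  induction d using Sym2.ind with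
  | _ a b =>
    rcases Sym2.mem_iff.1 hy with rfl | rfl
    · exact c.fst_mem_support_of_mem_edges hd
    · exact c.snd_mem_support_of_mem_edges hd

variable {V : Type} [DecidableEq V]
  {G : SimpleGraph V} {S' : Set (Sym2 V)}
  {G' : SimpleGraph (V ⊕ {e : Sym2 V // e ∈ S'})}

section
variable
  (hS'E : S' ⊆ G.edgeSet)
  (hAdj₁ : ∀ u w : V, G'.Adj (Sum.inl u) (Sum.inl w) ↔ (G.Adj u w ∧ s(u, w) ∉ S'))
  (hAdj₂ : ∀ (u : V) (e : {e : Sym2 V // e ∈ S'}), G'.Adj (Sum.inl u) (Sum.inr e) ↔ u ∈ e.val)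
  (hAdj₃ : ∀ e f : {e : Sym2 V // e ∈ S'}, ¬ G'.Adj (Sum.inr e) (Sum.inr f))

include hS'E in
lemma adj_of_ne_mem (e : {e : Sym2 V // e ∈ S'}) {u x : V} (hu : u ∈ e.val) (hx : x ∈ e.val)
    (hne : u ≠ x) : G.Adj u x := by
  have h : e.val = s(u, x) := (Sym2.mem_and_mem_iff hne).1 ⟨hu, hx⟩
  have h2 := hS'E e.2
  rw [h] at h2
  exact h2

lemma val_eq (e : {e : Sym2 V // e ∈ S'}) {u x : V} (hu : u ∈ e.val) (hx : x ∈ e.val)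
    (hne : u ≠ x) : e.val = s(u, x) := (Sym2.mem_and_mem_iff hne).1 ⟨hu, hx⟩

noncomputable def project : ∀ {u w : V}, G'.Walk (Sum.inl u) (Sum.inl w) → G.Walk u w
  | _, _, .nil => .nil
  | u, _, .cons (v := Sum.inl x) h q =>
      .cons ((hAdj₁ u x).1 h).1 (project q)
  | _, _, .cons (v := Sum.inr e) _ (.cons (v := Sum.inr f) h' _) => ((hAdj₃ e f) h').elim
  | u, _, .cons (v := Sum.inr e) h (.cons (v := Sum.inl x) h' q) =>
      if hux : u = x then hux ▸ project q
      else .cons (adj_of_ne_mem hS'E e ((hAdj₂ u e).1 h) ((hAdj₂ x e).1 h'.symm) hux) (project q)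

lemma mem_support_project : ∀ {u w : V} (p : G'.Walk (Sum.inl u) (Sum.inl w)) (x : V),
    x ∈ (project hS'E hAdj₁ hAdj₂ hAdj₃ p).support → Sum.inl x ∈ p.support
  | _, _, .nil, x => by simp [project]
  | u, w, .cons (v := Sum.inl y) h q, x => by
    rw [project]
    simp only [support_cons, List.mem_cons]
    rintro (rfl | hx)
    · exact Or.inl rfl
    · exact Or.inr (mem_support_project q x hx)
  | u, w, .cons (v := Sum.inr e) h (.cons (v := Sum.inr f) h' q), x => ((hAdj₃ e f) h').elim
  | u, w, .cons (v := Sum.inr e) h (.cons (v := Sum.inl y) h' q), x => by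
    rw [project]
    split_ifs with hux
    · intro hx
      have hxx : x ∈ (project hS'E hAdj₁ hAdj₂ hAdj₃ q).support := by
        cases hux; exact hx
      exact List.mem_cons_of_mem _ (List.mem_cons_of_mem _ (mem_support_project q x hxx))
    · simp only [support_cons, List.mem_cons]
      rintro (rfl | hx)
      · exact Or.inl rfl
      · exact Or.inr (Or.inr (mem_support_project q x hx))

lemma mem_edges_project : ∀ {u w : V} (p : G'.Walk (Sum.inl u) (Sum.inl w)) (d : Sym2 V),
    d ∈ (project hS'E hAdj₁ hAdj₂ hAdj₃ p).edges →
      (∃ a b, d = s(a, b) ∧ s(Sum.inl a, Sum.inl b) ∈ p.edges) ∨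
      (∃ f : {e : Sym2 V // e ∈ S'}, d = f.val ∧ Sum.inr f ∈ p.support)
  | _, _, .nil, d => by simp [project]
  | u, w, .cons (v := Sum.inl y) h q, d => by
    rw [project]
    simp only [edges_cons, support_cons, List.mem_cons]
    rintro (rfl | hd)
    · exact Or.inl ⟨u, y, rfl, Or.inl rfl⟩
    · rcases mem_edges_project q d hd with ⟨a, b, rfl, hm⟩ | ⟨f, rfl, hm⟩
      · exact Or.inl ⟨a, b, rfl, Or.inr hm⟩
      · exact Or.inr ⟨f, rfl, Or.inr hm⟩
  | u, w, .cons (v := Sum.inr e) h (.cons (v := Sum.inr f) h' q), d => ((hAdj₃ e f) h').elim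
  | u, w, .cons (v := Sum.inr e) h (.cons (v := Sum.inl y) h' q), d => by
    rw [project]
    split_ifs with hux
    · intro hd
      have hdd : d ∈ (project hS'E hAdj₁ hAdj₂ hAdj₃ q).edges := by
        cases hux; exact hd
      rcases mem_edges_project q d hdd with ⟨a, b, rfl, hm⟩ | ⟨f, rfl, hm⟩
      · exact Or.inl ⟨a, b, rfl, by simp [hm]⟩
      · exact Or.inr ⟨f, rfl, by simp [hm]⟩
    · simp only [edges_cons, support_cons, List.mem_cons]
      rintro (rfl | hd)
      · exact Or.inr ⟨e, (val_eq e ((hAdj₂ u e).1 h) ((hAdj₂ y e).1 h'.symm) hux).symm,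
          Or.inr (Or.inl rfl)⟩
      · rcases mem_edges_project q d hd with ⟨a, b, rfl, hm⟩ | ⟨f, rfl, hm⟩
        · exact Or.inl ⟨a, b, rfl, Or.inr (Or.inr hm)⟩
        · exact Or.inr ⟨f, rfl, Or.inr (Or.inr hm)⟩

lemma support_project : ∀ {u w : V} (p : G'.Walk (Sum.inl u) (Sum.inl w)), p.IsTrail →
    (project hS'E hAdj₁ hAdj₂ hAdj₃ p).support = p.support.filterMap (Sum.getLeft?)
  | _, _, .nil, _ => by simp [project]
  | u, w, .cons (v := Sum.inl y) h q, ht => by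
    rw [project]
    simp [support_project q ht.of_cons, Sum.getLeft?]
  | u, w, .cons (v := Sum.inr e) h (.cons (v := Sum.inr f) h' q), ht => ((hAdj₃ e f) h').elim
  | u, w, .cons (v := Sum.inr e) h (.cons (v := Sum.inl y) h' q), ht => by
    have hne : u ≠ y := by
      rintro rfl
      have h2 := ht.edges_nodup
      simp only [edges_cons, List.nodup_cons, List.mem_cons] at h2
      exact h2.1 (Or.inl (Sym2.eq_swap))
    rw [project, dif_neg hne]
    simp [support_project q (ht.of_cons.of_cons), Sum.getLeft?, List.filterMap_cons]

lemma isPath_project {u w : V} (p : G'.Walk (Sum.inl u) (Sum.inl w)) (hp : p.IsPath) :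
    (project hS'E hAdj₁ hAdj₂ hAdj₃ p).IsPath := by
  rw [isPath_def, support_project hS'E hAdj₁ hAdj₂ hAdj₃ p hp.isTrail]
  refine List.Nodup.filterMap ?_ hp.support_nodup
  intro a a' b hb hb'
  rw [Option.mem_def, Sum.getLeft?_eq_some_iff] at hb hb'
  rw [hb, hb']

lemma val_mem_edges_project : ∀ {u w : V} (p : G'.Walk (Sum.inl u) (Sum.inl w))
    (e : {e : Sym2 V // e ∈ S'}), p.IsTrail → Sum.inr e ∈ p.support →
    e.val ∈ (project hS'E hAdj₁ hAdj₂ hAdj₃ p).edges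
  | _, _, .nil, e, _, hm => by simp at hm
  | u, w, .cons (v := Sum.inl y) h q, e, ht, hm => by
    rw [project]
    simp only [support_cons, List.mem_cons] at hm
    rcases hm with hm | hm
    · simp at hm
    · exact List.mem_cons_of_mem _ (val_mem_edges_project q e ht.of_cons hm)
  | u, w, .cons (v := Sum.inr e') h (.cons (v := Sum.inr f) h' q), e, ht, hm =>
      ((hAdj₃ e' f) h').elim
  | u, w, .cons (v := Sum.inr e') h (.cons (v := Sum.inl y) h' q), e, ht, hm => by
    have hne : u ≠ y := by
      rintro rfl
      have h2 := ht.edges_nodup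
      simp only [edges_cons, List.nodup_cons, List.mem_cons] at h2
      exact h2.1 (Or.inl (Sym2.eq_swap))
    rw [project, dif_neg hne]
    by_cases hee : e = e'
    · subst hee
      simp only [edges_cons, List.mem_cons]
      exact Or.inl (val_eq e ((hAdj₂ u e).1 h) ((hAdj₂ y e).1 h'.symm) hne)
    · simp only [support_cons, List.mem_cons] at hm
      rcases hm with hm | hm | hm
      · simp at hm
      · exact absurd (inr_injective hm) hee
      · exact List.mem_cons_of_mem _
          (val_mem_edges_project q e (ht.of_cons.of_cons) hm)

lemma isCycle_project : ∀ {v : V} (c : G'.Walk (Sum.inl v) (Sum.inl v)), c.IsCycle →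
    (project hS'E hAdj₁ hAdj₂ hAdj₃ c).IsCycle
  | v, .nil, hc => by simpa using hc.three_le_length
  | v, .cons (v := Sum.inl x) h q, hc => by
    rw [cons_isCycle_iff] at hc
    rw [project, cons_isCycle_iff]
    refine ⟨isPath_project hS'E hAdj₁ hAdj₂ hAdj₃ q hc.1, ?_⟩
    intro hd
    rcases mem_edges_project hS'E hAdj₁ hAdj₂ hAdj₃ q _ hd with ⟨a, b, heq, hm⟩ | ⟨f, heq, hm⟩
    · rw [Sym2.eq_iff] at heq
      rcases heq with ⟨rfl, rfl⟩ | ⟨rfl, rfl⟩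
      · exact hc.2 hm
      · rw [Sym2.eq_swap] at hm; exact hc.2 hm
    · exact ((hAdj₁ v x).1 h).2 (heq ▸ f.2)
  | v, .cons (v := Sum.inr e) h (.cons (v := Sum.inr f) h' q), hc => ((hAdj₃ e f) h').elim
  | v, .cons (v := Sum.inr e) h (.cons (v := Sum.inl x) h' q), hc => by
    rw [cons_isCycle_iff] at hc
    have hne : v ≠ x := by
      rintro rfl
      exact hc.2 (by simp [Sym2.eq_swap])
    have hq := hc.1
    rw [cons_isPath_iff] at hq
    have heval : e.val = s(v, x) := val_eq e ((hAdj₂ v e).1 h) ((hAdj₂ x e).1 h'.symm) hne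
    rw [project, dif_neg hne, cons_isCycle_iff]
    refine ⟨isPath_project hS'E hAdj₁ hAdj₂ hAdj₃ q hq.1, ?_⟩
    intro hd
    rcases mem_edges_project hS'E hAdj₁ hAdj₂ hAdj₃ q _ hd with ⟨a, b, heq, hm⟩ | ⟨f, heq, hm⟩
    · have hadj : G'.Adj (Sum.inl a) (Sum.inl b) := q.adj_of_mem_edges hm
      have : s(a, b) ∉ S' := ((hAdj₁ a b).1 hadj).2
      rw [← heq, ← heval] at this
      exact this e.2
    · have : f = e := Subtype.ext (by rw [← heq, heval])
      subst this
      exact hq.2 hm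
noncomputable def lift : ∀ {u w : V}, G.Walk u w → G'.Walk (Sum.inl u) (Sum.inl w)
  | _, _, .nil => .nil
  | u, _, .cons (v := x) h q =>
    if he : s(u, x) ∈ S' then
      .cons ((hAdj₂ u ⟨_, he⟩).2 (by simp))
        (.cons (((hAdj₂ x ⟨_, he⟩).2 (by simp)).symm) (lift q))
    else
      .cons ((hAdj₁ u x).2 ⟨h, he⟩) (lift q)

lemma mem_support_lift : ∀ {u w : V} (p : G.Walk u w),
    ∀ x ∈ (lift hAdj₁ hAdj₂ p).support,
      (∃ a, x = Sum.inl a ∧ a ∈ p.support) ∨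
        (∃ f : {e : Sym2 V // e ∈ S'}, x = Sum.inr f ∧ f.val ∈ p.edges) := by
  intro u w p
  induction p with
  | nil => simp [lift]
  | cons h q ih =>
    intro x hx
    rw [lift] at hx
    split_ifs at hx with he
    · simp only [support_cons, List.mem_cons] at hx
      rcases hx with rfl | rfl | hx
      · exact Or.inl ⟨_, rfl, by simp⟩
      · exact Or.inr ⟨_, rfl, by simp⟩
      · rcases ih x hx with ⟨a, rfl, ha⟩ | ⟨f, rfl, hf⟩
        · exact Or.inl ⟨a, rfl, by simp [ha]⟩
        · exact Or.inr ⟨f, rfl, by simp [hf]⟩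
    · simp only [support_cons, List.mem_cons] at hx
      rcases hx with rfl | hx
      · exact Or.inl ⟨_, rfl, by simp⟩
      · rcases ih x hx with ⟨a, rfl, ha⟩ | ⟨f, rfl, hf⟩
        · exact Or.inl ⟨a, rfl, by simp [ha]⟩
        · exact Or.inr ⟨f, rfl, by simp [hf]⟩

lemma inl_mem_edges_lift {a b : V} : ∀ {u w : V} (p : G.Walk u w),
    s(Sum.inl a, Sum.inl b) ∈ (lift hAdj₁ hAdj₂ p).edges → s(a, b) ∈ p.edges := by
  intro u w p
  induction p with
  | nil => simp [lift]
  | cons h q ih =>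
    intro hx
    rw [lift] at hx
    split_ifs at hx with he <;> simp only [edges_cons, List.mem_cons] at hx ⊢
    · rcases hx with h1 | h1 | h1
      · rw [Sym2.eq_iff] at h1; simp at h1
      · rw [Sym2.eq_iff] at h1; simp at h1
      · exact Or.inr (ih h1)
    · rcases hx with h1 | h1
      · rw [Sym2.eq_iff] at h1 ⊢
        rcases h1 with ⟨h2, h3⟩ | ⟨h2, h3⟩
        · exact Or.inl (Or.inl ⟨inl_injective h2, inl_injective h3⟩)
        · exact Or.inl (Or.inr ⟨inl_injective h2, inl_injective h3⟩)
      · exact Or.inr (ih h1)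

lemma inr_mem_edges_lift {a : V} {f : {e : Sym2 V // e ∈ S'}} : ∀ {u w : V} (p : G.Walk u w),
    s(Sum.inl a, Sum.inr f) ∈ (lift hAdj₁ hAdj₂ p).edges → f.val ∈ p.edges := by
  intro u w p
  induction p with
  | nil => simp [lift]
  | cons h q ih =>
    intro hx
    rw [lift] at hx
    split_ifs at hx with he <;> simp only [edges_cons, List.mem_cons] at hx ⊢
    · rcases hx with h1 | h1 | h1
      · rw [Sym2.eq_iff] at h1
        rcases h1 with ⟨h2, h3⟩ | ⟨h2, h3⟩
        · cases inr_injective h3; exact Or.inl rfl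
        · exact absurd h2 (by simp)
      · rw [Sym2.eq_iff] at h1
        rcases h1 with ⟨h2, h3⟩ | ⟨h2, h3⟩
        · exact absurd h2 (by simp)
        · cases inr_injective h3; exact Or.inl rfl
      · exact Or.inr (ih h1)
    · rcases hx with h1 | h1
      · rw [Sym2.eq_iff] at h1; simp at h1
      · exact Or.inr (ih h1)

lemma inr_mem_support_lift {f : Sym2 V} (hf : f ∈ S') : ∀ {u w : V} (p : G.Walk u w),
    f ∈ p.edges → Sum.inr ⟨f, hf⟩ ∈ (lift hAdj₁ hAdj₂ p).support := by
  intro u w p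
  induction p with
  | nil => simp
  | cons h q ih =>
    intro hx
    simp only [edges_cons, List.mem_cons] at hx
    rw [lift]
    rcases hx with rfl | hx
    · rw [dif_pos hf]
      simp
    · split_ifs with he <;> simp [ih hx]

lemma isPath_lift : ∀ {u w : V} (p : G.Walk u w), p.IsPath → (lift hAdj₁ hAdj₂ p).IsPath := by
  intro u w p
  induction p with
  | nil => simp [lift]
  | cons h q ih =>
    intro hp
    rw [cons_isPath_iff] at hp
    rw [lift]
    split_ifs with he
    · rw [cons_isPath_iff, cons_isPath_iff]
      refine ⟨⟨ih hp.1, ?_⟩, ?_⟩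
      · intro hmem
        rcases mem_support_lift hAdj₁ hAdj₂ q _ hmem with ⟨a, ha, _⟩ | ⟨f, hf, hf2⟩
        · simp at ha
        · cases inr_injective hf
          exact hp.2 (q.fst_mem_support_of_mem_edges hf2)
      · simp only [support_cons, List.mem_cons]
        rintro (h1 | h1)
        · simp at h1
        · rcases mem_support_lift hAdj₁ hAdj₂ q _ h1 with ⟨a, ha, ha2⟩ | ⟨f, hf, _⟩
          · cases inl_injective ha; exact hp.2 ha2
          · simp at hf
    · rw [cons_isPath_iff]
      refine ⟨ih hp.1, ?_⟩
      intro hmem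
      rcases mem_support_lift hAdj₁ hAdj₂ q _ hmem with ⟨a, ha, ha2⟩ | ⟨f, hf, _⟩
      · cases inl_injective ha; exact hp.2 ha2
      · simp at hf

lemma isCycle_lift {v : V} (c : G.Walk v v) (hc : c.IsCycle) :
    (lift hAdj₁ hAdj₂ c).IsCycle := by
  cases c with
  | nil => simpa using hc.three_le_length
  | cons h q =>
    rw [cons_isCycle_iff] at hc
    rw [lift]
    split_ifs with he
    · rw [cons_isCycle_iff, cons_isPath_iff]
      refine ⟨⟨isPath_lift hAdj₁ hAdj₂ q hc.1, ?_⟩, ?_⟩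
      · intro hmem
        rcases mem_support_lift hAdj₁ hAdj₂ q _ hmem with ⟨a, ha, _⟩ | ⟨f, hf, hf2⟩
        · simp at ha
        · cases inr_injective hf; exact hc.2 hf2
      · simp only [edges_cons, List.mem_cons]
        rintro (h1 | h1)
        · rw [Sym2.eq_iff] at h1
          rcases h1 with ⟨h2, _⟩ | ⟨h2, _⟩
          · simp at h2
          · cases inl_injective h2; exact h.ne rfl
        · exact hc.2 (inr_mem_edges_lift hAdj₁ hAdj₂ q h1)
    · rw [cons_isCycle_iff]
      exact ⟨isPath_lift hAdj₁ hAdj₂ q hc.1,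
        fun h1 => hc.2 (inl_mem_edges_lift hAdj₁ hAdj₂ q h1)⟩

end
end SubsetFVSAux

open SubsetFVSAux in
/-- Subdividing every edge of `S'` once and marking the new vertices
as `S` turns the edge-version of Subset-FVS into the vertex-version: there is
a set `T ⊆ V`, `|T| ≤ k`, such that no simple cycle of `G[V ∖ T]` contains an edge of
`S'`, iff there is a set `T'` of vertices of the subdivided graph `G'`, `|T'| ≤ k`,
such that no simple cycle of `G'[V(G') ∖ T']` contains one of the new vertices. -/
theorem subsetFVS_edge_iff_vertex {V : Type} [Fintype V] [DecidableEq V]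
    (G : SimpleGraph V) (S' : Set (Sym2 V)) (hS'E : S' ⊆ G.edgeSet) (k : ℕ)
    (G' : SimpleGraph (V ⊕ {e : Sym2 V // e ∈ S'}))
    (hAdj₁ : ∀ u w : V, G'.Adj (Sum.inl u) (Sum.inl w) ↔ (G.Adj u w ∧ s(u, w) ∉ S'))
    (hAdj₂ : ∀ (u : V) (e : {e : Sym2 V // e ∈ S'}),
      G'.Adj (Sum.inl u) (Sum.inr e) ↔ u ∈ e.val)
    (hAdj₃ : ∀ e f : {e : Sym2 V // e ∈ S'}, ¬ G'.Adj (Sum.inr e) (Sum.inr f)) :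
    (∃ T : Set V, T.ncard ≤ k ∧
        ∀ (v : V) (c : G.Walk v v), c.IsCycle → (∀ x ∈ c.support, x ∉ T) →
          ∀ e ∈ c.edges, e ∉ S') ↔
    (∃ T' : Set (V ⊕ {e : Sym2 V // e ∈ S'}), T'.ncard ≤ k ∧
        ∀ (v : V ⊕ {e : Sym2 V // e ∈ S'}) (c : G'.Walk v v), c.IsCycle →
          (∀ x ∈ c.support, x ∉ T') →
          ∀ x ∈ c.support, x ∉ Set.range (Sum.inr : {e : Sym2 V // e ∈ S'} → V ⊕ {e : Sym2 V // e ∈ S'})) := by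
  constructor
  · rintro ⟨T, hTk, hT⟩
    refine ⟨Sum.inl '' T, ?_, ?_⟩
    · rw [Set.ncard_image_of_injective _ Sum.inl_injective]; exact hTk
    · intro v c hc hdisj x hx hxr
      obtain ⟨e₀, rfl⟩ := hxr
      obtain ⟨w, hw⟩ : ∃ w : V, Sum.inl w ∈ c.support := by
        cases v with
        | inl w => exact ⟨w, c.start_mem_support⟩
        | inr f =>
          cases c with
          | nil => simpa using hc.three_le_length
          | cons h q =>
            rename_i y
            cases y with
            | inl w => exact ⟨w, by simp [q.start_mem_support]⟩
            | inr f' => exact (hAdj₃ _ _ h).elim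
      have hmem : ∀ y, y ∈ (c.rotate _ hw).support ↔ y ∈ c.support := mem_support_rotate c hw
      set c' := c.rotate _ hw with hc'def
      have hc' : c'.IsCycle := hc.rotate hw
      have hd := isCycle_project hS'E hAdj₁ hAdj₂ hAdj₃ c' hc'
      have he : e₀.val ∈ (project hS'E hAdj₁ hAdj₂ hAdj₃ c').edges :=
        val_mem_edges_project hS'E hAdj₁ hAdj₂ hAdj₃ c' e₀ hc'.isTrail ((hmem _).2 hx)
      refine hT w (project hS'E hAdj₁ hAdj₂ hAdj₃ c') hd ?_ e₀.val he e₀.2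
      intro y hy hyT
      exact hdisj _ ((hmem _).1 (mem_support_project hS'E hAdj₁ hAdj₂ hAdj₃ c' y hy))
        (Set.mem_image_of_mem _ hyT)
  · rintro ⟨T', hTk', hT'⟩
    refine ⟨(Sum.elim id (fun e => e.val.out.1)) '' T', ?_, ?_⟩
    · exact le_trans (Set.ncard_image_le T'.toFinite) hTk'
    · intro v c hc hdisj ed hed hedS
      have hcyc := isCycle_lift hAdj₁ hAdj₂ c hc
      refine hT' (Sum.inl v) (lift hAdj₁ hAdj₂ c) hcyc ?_ (Sum.inr ⟨ed, hedS⟩)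
        (inr_mem_support_lift hAdj₁ hAdj₂ hedS c hed) ⟨⟨ed, hedS⟩, rfl⟩
      intro x hx hxT'
      rcases mem_support_lift hAdj₁ hAdj₂ c x hx with ⟨a, rfl, ha⟩ | ⟨f, rfl, hf⟩
      · exact hdisj a ha ⟨Sum.inl a, hxT', rfl⟩
      · have h2 : f.val.out.1 ∈ c.support :=
          mem_support_of_mem_edges'' c hf (Sym2.out_fst_mem _)
        exact hdisj _ h2 ⟨Sum.inr f, hxT', rfl⟩
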